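/- Let F̄ : ℝ^K → ℝ^K be a κ-contraction (κ ∈ (0,1)) with respect to a norm ‖·‖_c, with fixed point w*. Let M(x) = (1/2)‖x‖_m² be a differentiable Lyapunov function arising from a norm ‖·‖_m satisfying l‖x‖_m ≤ ‖x‖_c ≤ u‖x‖_m, where ⟨∇M(x),x'⟩ ≤ ‖x‖_m‖x'‖_m and ⟨∇M(x),x⟩ ≥ ‖x‖_m². Then for all w: ⟨∇M(w - w*), F̄(w) - w⟩ ≤ -(1 - κ·u/l)·‖w - w*‖_m². -/

import Mathlib

/-- Lyapunov drift inequality. If F̄ is a κ-contraction w.r.t.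
‖·‖_c with fixed point w*, the norms satisfy l‖·‖_m ≤ ‖·‖_c ≤ u‖·‖_m, and g is
the gradient field of M = (1/2)‖·‖_m² satisfying ⟨g(x), x'⟩ ≤ ‖x‖_m‖x'‖_m and
⟨g(x), x⟩ ≥ ‖x‖_m², then ⟨g(w-w*), F̄(w)-w⟩ ≤ -(1 - κ u/l) ‖w-w*‖_m². -/
theorem stmt_17 {K : ℕ} (nc nm : EuclideanSpace ℝ (Fin K) → ℝ)
    (Fbar : EuclideanSpace ℝ (Fin K) → EuclideanSpace ℝ (Fin K))
    (κ l u : ℝ) (hκ : κ ∈ Set.Ioo (0 : ℝ) 1) (hl : 0 < l) (hu : 0 < u)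
    (wstar : EuclideanSpace ℝ (Fin K)) (hfix : Fbar wstar = wstar)
    (hcontr : ∀ w w', nc (Fbar w - Fbar w') ≤ κ * nc (w - w'))
    (heq : ∀ x, l * nm x ≤ nc x ∧ nc x ≤ u * nm x)
    (hnm_nonneg : ∀ x, 0 ≤ nm x)
    (hnm_tri : ∀ x y, nm (x + y) ≤ nm x + nm y)
    (g : EuclideanSpace ℝ (Fin K) → EuclideanSpace ℝ (Fin K))
    (hg1 : ∀ x x', (inner ℝ (g x) x' : ℝ) ≤ nm x * nm x')
    (hg2 : ∀ x, nm x ^ 2 ≤ (inner ℝ (g x) x : ℝ)) :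
    ∀ w, (inner ℝ (g (w - wstar)) (Fbar w - w) : ℝ) ≤
      -(1 - κ * u / l) * nm (w - wstar) ^ 2 := by
  intro w
  have hdecomp : Fbar w - w = (Fbar w - Fbar wstar) - (w - wstar) := by
    rw [hfix]; abel
  rw [hdecomp, inner_sub_right]
  have h1 : (inner ℝ (g (w - wstar)) (Fbar w - Fbar wstar) : ℝ) ≤
      nm (w - wstar) * nm (Fbar w - Fbar wstar) := hg1 _ _
  have h2 : nm (Fbar w - Fbar wstar) ≤ κ * u / l * nm (w - wstar) := by
    have ha : l * nm (Fbar w - Fbar wstar) ≤ nc (Fbar w - Fbar wstar) := (heq _).1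
    have hb : nc (Fbar w - Fbar wstar) ≤ κ * nc (w - wstar) := hcontr _ _
    have hc : nc (w - wstar) ≤ u * nm (w - wstar) := (heq _).2
    have : l * nm (Fbar w - Fbar wstar) ≤ κ * (u * nm (w - wstar)) :=
      ha.trans (hb.trans (by nlinarith [hκ.1.le]))
    rw [div_mul_eq_mul_div, le_div_iff₀ hl]
    nlinarith
  have h3 := hg2 (w - wstar)
  have hnn := hnm_nonneg (w - wstar)
  nlinarith [mul_le_mul_of_nonneg_left h2 hnn]
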